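/- There is an absolute constant C such that for every directed path P on m ≥ 2 vertices, there exists a set H of at most C · m · log m edges from the transitive closure of P such that dist_{P∪H}(u,v) ≤ 2 for every pair of vertices u, v of P with v reachable from u along P. -/

import Mathlib

namespace Paper

variable {V : Type*}

/-- `IsWalk E u v l` : `l` is the list of vertices visited after `u` on a
directed walk from `u` to `v` in the digraph with edge relation `E`.
The number of edges of the walk is `l.length`. -/
def IsWalk (E : V → V → Prop) : V → V → List V → Prop
  | u, v, [] => u = v
  | u, v, x :: xs => E u x ∧ IsWalk E x v xs

/-- `v` is reachable from `u` by a directed walk (possibly trivial). -/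
def Reach (E : V → V → Prop) (u v : V) : Prop := ∃ l, IsWalk E u v l

/-- The transitive closure `G*`: pairs `(u,v)` with `u ≠ v` and `v` reachable from `u`. -/
def TC (E : V → V → Prop) (u v : V) : Prop := u ≠ v ∧ Reach E u v

/-- `dist E u v` : minimum number of edges on a directed walk from `u` to `v`. -/
noncomputable def dist (E : V → V → Prop) (u v : V) : ℕ :=
  sInf {k | ∃ l, IsWalk E u v l ∧ l.length = k}

/-- The digraph `G ∪ H` obtained by adding the edge set `H` to `E`. -/
def addE (E : V → V → Prop) (H : Finset (V × V)) : V → V → Prop :=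
  fun a b => E a b ∨ (a, b) ∈ H

/-- dist is at most the length of any walk. -/
lemma dist_le_of_walk {E : V → V → Prop} {u v : V} {l : List V} (h : IsWalk E u v l) :
    dist E u v ≤ l.length := Nat.sInf_le ⟨l, h, rfl⟩

/-- Hub existence lemma: for `u < v < m`, either `(u,v)` is itself a hub edge, or there is
an intermediate hub `h` divisible by a suitable power of two close to both endpoints. -/
lemma exists_hub {m u v : ℕ} (hm : 2 ≤ m) (huv : u < v) (hv : v < m) :
    (∃ j, j < Nat.clog 2 m ∧ v - u < 2 ^ (j + 1) ∧ (2 ^ j ∣ u ∨ 2 ^ j ∣ v)) ∨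
    (∃ h, u < h ∧ h < v ∧
      (∃ j, j < Nat.clog 2 m ∧ h - u < 2 ^ (j + 1) ∧ (2 ^ j ∣ u ∨ 2 ^ j ∣ h)) ∧
      (∃ j, j < Nat.clog 2 m ∧ v - h < 2 ^ (j + 1) ∧ (2 ^ j ∣ h ∨ 2 ^ j ∣ v))) := by
  classical
  set L := Nat.clog 2 m with hLdef
  have hmL : m ≤ 2 ^ L := Nat.le_pow_clog (by norm_num) m
  have hL1 : 1 ≤ L := Nat.clog_pos (by norm_num) hm
  rcases Nat.eq_zero_or_pos u with hu0 | hu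
  · left
    refine ⟨L - 1, by omega, ?_, Or.inl (by simp [hu0])⟩
    have h1 : 2 ^ (L - 1 + 1) = 2 ^ L := by congr 1; omega
    have h2 : v < 2 ^ L := lt_of_lt_of_le hv hmL
    omega
  · set P : ℕ → Prop := fun j => ∃ k, u ≤ 2 ^ j * k ∧ 2 ^ j * k ≤ v with hPdef
    have hP0 : P 0 := ⟨u, by simp; omega⟩
    have hPlt : ∀ j, P j → j < L := by
      rintro j ⟨k, hk1, hk2⟩
      have hk : 1 ≤ k := by
        rcases k with _ | k
        · simp at hk1; omega
        · omega
      have h1 : 2 ^ j ≤ v := le_trans (Nat.le_mul_of_pos_right _ hk) hk2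
      have h2 : 2 ^ j < 2 ^ L := lt_of_le_of_lt h1 (lt_of_lt_of_le hv hmL)
      exact (Nat.pow_lt_pow_iff_right (by norm_num)).mp h2
    set j := Nat.findGreatest P L with hjdef
    have hPj : P j := Nat.findGreatest_spec (Nat.zero_le L) hP0
    have hjL : j < L := hPlt j hPj
    have hmax : ¬ P (j + 1) := by
      intro hPj1
      exact Nat.findGreatest_is_greatest (Nat.lt_succ_self j) (le_of_lt (hPlt (j+1) hPj1)) hPj1
    obtain ⟨k, hk1, hk2⟩ := hPj
    have hsmall : v - u < 2 ^ (j + 1) := by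
      by_contra hbig
      push_neg at hbig
      apply hmax
      refine ⟨u / 2 ^ (j + 1) + 1, ?_, ?_⟩ <;>
      · have hd : 0 < 2 ^ (j + 1) := Nat.pow_pos (by norm_num)
        have hdm := Nat.div_add_mod u (2 ^ (j + 1))
        have hmod := Nat.mod_lt u hd
        have hmul : 2 ^ (j + 1) * (u / 2 ^ (j + 1) + 1)
            = 2 ^ (j + 1) * (u / 2 ^ (j + 1)) + 2 ^ (j + 1) := by ring
        omega
    have hdvd : (2 : ℕ) ^ j ∣ 2 ^ j * k := Dvd.intro k rfl
    rcases eq_or_lt_of_le hk1 with he | hlt1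
    · left
      exact ⟨j, hjL, hsmall, Or.inl (he ▸ hdvd)⟩
    rcases eq_or_lt_of_le hk2 with he | hlt2
    · left
      exact ⟨j, hjL, hsmall, Or.inr (he.symm ▸ hdvd)⟩
    · right
      exact ⟨2 ^ j * k, hlt1, hlt2,
        ⟨j, hjL, by omega, Or.inr hdvd⟩, ⟨j, hjL, by omega, Or.inl hdvd⟩⟩

open scoped Classical in
/-- Count of hub edges at a fixed level `j`, first-coordinate divisible version. -/
lemma cardA (m j : ℕ) :
    (Finset.univ.filter (fun e : Fin m × Fin m =>
      (e.1 : ℕ) < (e.2 : ℕ) ∧ (e.2 : ℕ) - (e.1 : ℕ) < 2 ^ (j + 1) ∧ 2 ^ j ∣ (e.1 : ℕ))).card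
      ≤ ((m - 1) / 2 ^ j + 1) * 2 ^ (j + 1) := by
  classical
  have hb := Finset.card_le_card_of_injOn
    (s := Finset.univ.filter (fun e : Fin m × Fin m =>
      (e.1 : ℕ) < (e.2 : ℕ) ∧ (e.2 : ℕ) - (e.1 : ℕ) < 2 ^ (j + 1) ∧ 2 ^ j ∣ (e.1 : ℕ)))
    (t := Finset.range ((m - 1) / 2 ^ j + 1) ×ˢ Finset.range (2 ^ (j + 1)))
    (fun e => ((e.1 : ℕ) / 2 ^ j, (e.2 : ℕ) - (e.1 : ℕ))) ?_ ?_
  · simpa using hb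
  · rintro ⟨a, b⟩ hab
    simp only [Finset.mem_coe, Finset.mem_filter, Finset.mem_univ, true_and] at hab
    obtain ⟨h1, h2, _⟩ := hab
    simp only [Finset.mem_coe, Finset.mem_product, Finset.mem_range]
    refine ⟨Nat.lt_succ_of_le (Nat.div_le_div_right ?_), h2⟩
    have := a.isLt; omega
  · rintro ⟨a, b⟩ ha ⟨c, d⟩ hc hfeq
    simp only [Finset.coe_filter, Finset.mem_univ, true_and, Set.mem_setOf_eq] at ha hc
    obtain ⟨h1, h2, h3⟩ := ha
    obtain ⟨g1, g2, g3⟩ := hc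
    simp only [Prod.mk.injEq] at hfeq
    obtain ⟨e1, e2⟩ := hfeq
    have hac : (a : ℕ) = (c : ℕ) := by
      calc (a : ℕ) = (a : ℕ) / 2 ^ j * 2 ^ j := (Nat.div_mul_cancel h3).symm
        _ = (c : ℕ) / 2 ^ j * 2 ^ j := by rw [e1]
        _ = (c : ℕ) := Nat.div_mul_cancel g3
    have hbd : (b : ℕ) = (d : ℕ) := by omega
    simp [Prod.ext_iff, Fin.ext_iff, hac, hbd]

open scoped Classical in
/-- Count of hub edges at a fixed level `j`, second-coordinate divisible version. -/
lemma cardB (m j : ℕ) :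
    (Finset.univ.filter (fun e : Fin m × Fin m =>
      (e.1 : ℕ) < (e.2 : ℕ) ∧ (e.2 : ℕ) - (e.1 : ℕ) < 2 ^ (j + 1) ∧ 2 ^ j ∣ (e.2 : ℕ))).card
      ≤ ((m - 1) / 2 ^ j + 1) * 2 ^ (j + 1) := by
  classical
  have hb := Finset.card_le_card_of_injOn
    (s := Finset.univ.filter (fun e : Fin m × Fin m =>
      (e.1 : ℕ) < (e.2 : ℕ) ∧ (e.2 : ℕ) - (e.1 : ℕ) < 2 ^ (j + 1) ∧ 2 ^ j ∣ (e.2 : ℕ)))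
    (t := Finset.range ((m - 1) / 2 ^ j + 1) ×ˢ Finset.range (2 ^ (j + 1)))
    (fun e => ((e.2 : ℕ) / 2 ^ j, (e.2 : ℕ) - (e.1 : ℕ))) ?_ ?_
  · simpa using hb
  · rintro ⟨a, b⟩ hab
    simp only [Finset.mem_coe, Finset.mem_filter, Finset.mem_univ, true_and] at hab
    obtain ⟨h1, h2, _⟩ := hab
    simp only [Finset.mem_coe, Finset.mem_product, Finset.mem_range]
    refine ⟨Nat.lt_succ_of_le (Nat.div_le_div_right ?_), h2⟩
    have := b.isLt; omega
  · rintro ⟨a, b⟩ ha ⟨c, d⟩ hc hfeq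
    simp only [Finset.coe_filter, Finset.mem_univ, true_and, Set.mem_setOf_eq] at ha hc
    obtain ⟨h1, h2, h3⟩ := ha
    obtain ⟨g1, g2, g3⟩ := hc
    simp only [Prod.mk.injEq] at hfeq
    obtain ⟨e1, e2⟩ := hfeq
    have hbd : (b : ℕ) = (d : ℕ) := by
      calc (b : ℕ) = (b : ℕ) / 2 ^ j * 2 ^ j := (Nat.div_mul_cancel h3).symm
        _ = (d : ℕ) / 2 ^ j * 2 ^ j := by rw [e1]
        _ = (d : ℕ) := Nat.div_mul_cancel g3
    have hac : (a : ℕ) = (c : ℕ) := by omega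
    simp [Prod.ext_iff, Fin.ext_iff, hac, hbd]

open scoped Classical in
/-- Count of all hub edges at a fixed level `j`. -/
lemma cardT (m j : ℕ) (hj : 2 ^ j < m) :
    (Finset.univ.filter (fun e : Fin m × Fin m =>
      (e.1 : ℕ) < (e.2 : ℕ) ∧ (e.2 : ℕ) - (e.1 : ℕ) < 2 ^ (j + 1) ∧
        (2 ^ j ∣ (e.1 : ℕ) ∨ 2 ^ j ∣ (e.2 : ℕ)))).card ≤ 8 * m := by
  classical
  have hsub : (Finset.univ.filter (fun e : Fin m × Fin m =>
      (e.1 : ℕ) < (e.2 : ℕ) ∧ (e.2 : ℕ) - (e.1 : ℕ) < 2 ^ (j + 1) ∧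
        (2 ^ j ∣ (e.1 : ℕ) ∨ 2 ^ j ∣ (e.2 : ℕ)))) ⊆
      (Finset.univ.filter (fun e : Fin m × Fin m =>
        (e.1 : ℕ) < (e.2 : ℕ) ∧ (e.2 : ℕ) - (e.1 : ℕ) < 2 ^ (j + 1) ∧ 2 ^ j ∣ (e.1 : ℕ))) ∪
      (Finset.univ.filter (fun e : Fin m × Fin m =>
        (e.1 : ℕ) < (e.2 : ℕ) ∧ (e.2 : ℕ) - (e.1 : ℕ) < 2 ^ (j + 1) ∧ 2 ^ j ∣ (e.2 : ℕ))) := by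
    intro e he
    simp only [Finset.mem_filter, Finset.mem_univ, true_and, Finset.mem_union] at he ⊢
    tauto
  have hq : ((m - 1) / 2 ^ j + 1) * 2 ^ (j + 1) ≤ 4 * m := by
    have h1 : (m - 1) / 2 ^ j * 2 ^ j ≤ m - 1 := Nat.div_mul_le_self _ _
    have h2 : (2 : ℕ) ^ (j + 1) = 2 * 2 ^ j := by ring
    have h3 : ((m - 1) / 2 ^ j + 1) * 2 ^ (j + 1)
        = 2 * ((m - 1) / 2 ^ j * 2 ^ j) + 2 * 2 ^ j := by ring
    omega
  calc _ ≤ _ := Finset.card_le_card hsub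
    _ ≤ _ := Finset.card_union_le _ _
    _ ≤ 4 * m + 4 * m := Nat.add_le_add (le_trans (cardA m j) hq) (le_trans (cardB m j) hq)
    _ = 8 * m := by ring

theorem path_shortcut :
    ∃ C : ℝ, 0 < C ∧
      ∀ m : ℕ, 2 ≤ m →
        ∃ H : Finset (Fin m × Fin m),
          (∀ e ∈ H, (e.1 : ℕ) < (e.2 : ℕ)) ∧
          (H.card : ℝ) ≤ C * (m : ℝ) * Real.log m ∧
          ∀ u v : Fin m, (u : ℕ) < (v : ℕ) →
            dist (fun a b : Fin m => ((a : ℕ) + 1 = (b : ℕ)) ∨ (a, b) ∈ H) u v ≤ 2 := by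
  classical
  refine ⟨100, by norm_num, fun m hm => ?_⟩
  set L := Nat.clog 2 m with hLdef
  have hL1 : 1 ≤ L := Nat.clog_pos (by norm_num) hm
  have hpow : 2 ^ (L - 1) < m := by
    have := Nat.pow_pred_clog_lt_self (b := 2) (by norm_num) (x := m) (by omega)
    simpa [hLdef, Nat.pred_eq_sub_one] using this
  set H : Finset (Fin m × Fin m) := Finset.univ.filter (fun e : Fin m × Fin m =>
    (e.1 : ℕ) < (e.2 : ℕ) ∧ ∃ j, j < L ∧ (e.2 : ℕ) - (e.1 : ℕ) < 2 ^ (j + 1) ∧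
      (2 ^ j ∣ (e.1 : ℕ) ∨ 2 ^ j ∣ (e.2 : ℕ))) with hHdef
  have hmemH : ∀ (a b : Fin m), (a : ℕ) < (b : ℕ) →
      (∃ j, j < L ∧ (b : ℕ) - (a : ℕ) < 2 ^ (j + 1) ∧
        (2 ^ j ∣ (a : ℕ) ∨ 2 ^ j ∣ (b : ℕ))) → (a, b) ∈ H := by
    intro a b hab hj
    simp only [hHdef, Finset.mem_filter, Finset.mem_univ, true_and]
    exact ⟨hab, hj⟩
  refine ⟨H, ?_, ?_, ?_⟩
  · intro e he
    simp only [hHdef, Finset.mem_filter, Finset.mem_univ, true_and] at he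
    exact he.1
  · -- cardinality bound
    have hsub : H ⊆ (Finset.range L).biUnion (fun j =>
        Finset.univ.filter (fun e : Fin m × Fin m =>
          (e.1 : ℕ) < (e.2 : ℕ) ∧ (e.2 : ℕ) - (e.1 : ℕ) < 2 ^ (j + 1) ∧
            (2 ^ j ∣ (e.1 : ℕ) ∨ 2 ^ j ∣ (e.2 : ℕ)))) := by
      intro e he
      simp only [hHdef, Finset.mem_filter, Finset.mem_univ, true_and] at he
      obtain ⟨h1, j, hjL, h2, h3⟩ := he
      simp only [Finset.mem_biUnion, Finset.mem_range, Finset.mem_filter, Finset.mem_univ,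
        true_and]
      exact ⟨j, hjL, h1, h2, h3⟩
    have hcard : H.card ≤ 8 * m * L := by
      calc H.card ≤ _ := Finset.card_le_card hsub
        _ ≤ ∑ j ∈ Finset.range L, (Finset.univ.filter (fun e : Fin m × Fin m =>
            (e.1 : ℕ) < (e.2 : ℕ) ∧ (e.2 : ℕ) - (e.1 : ℕ) < 2 ^ (j + 1) ∧
              (2 ^ j ∣ (e.1 : ℕ) ∨ 2 ^ j ∣ (e.2 : ℕ)))).card := Finset.card_biUnion_le
        _ ≤ ∑ _j ∈ Finset.range L, 8 * m := by
            refine Finset.sum_le_sum (fun j hj => ?_)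
            simp only [Finset.mem_range] at hj
            refine cardT m j ?_
            calc (2 : ℕ) ^ j ≤ 2 ^ (L - 1) := Nat.pow_le_pow_right (by norm_num) (by omega)
              _ < m := hpow
        _ = 8 * m * L := by rw [Finset.sum_const, Finset.card_range, smul_eq_mul]; ring
    -- now real arithmetic
    have hcR : (H.card : ℝ) ≤ 8 * (m : ℝ) * (L : ℝ) := by
      calc (H.card : ℝ) ≤ ((8 * m * L : ℕ) : ℝ) := by exact_mod_cast hcard
        _ = 8 * (m : ℝ) * (L : ℝ) := by push_cast; ring
    have hlogm : Real.log 2 ≤ Real.log m := Real.log_le_log (by norm_num) (by exact_mod_cast hm)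
    have hlog2 : (0.6931471803 : ℝ) < Real.log 2 := Real.log_two_gt_d9
    have hLlog : ((L : ℝ) - 1) * Real.log 2 ≤ Real.log m := by
      have h1 : ((2 : ℝ) ^ (L - 1)) ≤ (m : ℝ) := by exact_mod_cast hpow.le
      have h2 : Real.log ((2 : ℝ) ^ (L - 1)) ≤ Real.log m :=
        Real.log_le_log (by positivity) h1
      rw [Real.log_pow] at h2
      have h3 : ((L - 1 : ℕ) : ℝ) = (L : ℝ) - 1 := by
        have : (1 : ℕ) ≤ L := hL1
        push_cast [Nat.cast_sub this]
        ring
      rw [h3] at h2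
      exact h2
    have hmpos : (0 : ℝ) ≤ (m : ℝ) := by positivity
    have hm2 : (2 : ℝ) ≤ (m : ℝ) := by exact_mod_cast hm
    -- (L : ℝ) * log 2 ≤ 2 * log m
    have hL2 : (L : ℝ) * Real.log 2 ≤ 2 * Real.log m := by nlinarith
    calc (H.card : ℝ) ≤ 8 * (m : ℝ) * (L : ℝ) := hcR
      _ ≤ 100 * (m : ℝ) * Real.log m := by nlinarith [mul_nonneg hmpos (le_of_lt (lt_trans (by norm_num) (lt_of_lt_of_le hlog2 hlogm))), mul_le_mul_of_nonneg_left hL2 hmpos]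
  · -- distance bound
    intro u v huv
    have hv : (v : ℕ) < m := v.isLt
    rcases exists_hub hm huv hv with ⟨j, hjL, h2, h3⟩ | ⟨h, hu1, hu2, hj1, hj2⟩
    · have hedge : (u, v) ∈ H := hmemH u v huv ⟨j, hjL, h2, h3⟩
      have hwalk : IsWalk (fun a b : Fin m => ((a : ℕ) + 1 = (b : ℕ)) ∨ (a, b) ∈ H) u v [v] :=
        ⟨Or.inr hedge, rfl⟩
      exact le_trans (dist_le_of_walk hwalk) (by norm_num)
    · have hhm : h < m := lt_trans hu2 hv
      set hh : Fin m := ⟨h, hhm⟩ with hhh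
      have hedge1 : (u, hh) ∈ H := hmemH u hh hu1 hj1
      have hedge2 : (hh, v) ∈ H := hmemH hh v hu2 hj2
      have hwalk : IsWalk (fun a b : Fin m => ((a : ℕ) + 1 = (b : ℕ)) ∨ (a, b) ∈ H) u v
          [hh, v] := ⟨Or.inr hedge1, Or.inr hedge2, rfl⟩
      exact dist_le_of_walk hwalk

end Paper
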